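/- Let n ≥ 2 and r ≥ 2 be integers and let γ = (γ₀, …, γ_{r−1}) be an integer sequence with 0 ≤ γ_i ≤ r−2 for all 0 ≤ i ≤ r−1 and |γ_{i+1} − γ_i| ≤ 1 for all 0 ≤ i ≤ r−2. Then (E_{γ,r,n}^0, …, E_{γ,r,n}^{r−1})ᵀ = A · (E_{γ,r,n−1}^0, …, E_{γ,r,n−1}^{r−1})ᵀ, where A = (a_{ij})_{i,j=0}^{r−1} is the r × r matrix with a_{ij} = 0 if |i − j| ≤ γ_i, a_{ij} = 1 if j − i > γ_i, and a_{ij} = x if i − j > γ_i. -/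

import Mathlib

open Polynomial Finset

/-- The number of ascents of a word `w = (w₀, …, w_n)`: indices `i ∈ {0, …, n-1}`
with `w_i < w_{i+1}`. -/
def asc {n r : ℕ} (w : Fin (n + 1) → Fin r) : ℕ :=
  (Finset.univ.filter fun j : Fin n => w j.castSucc < w j.succ).card

/-- `Egamma r n γ i = E_{γ,r,n}^i`, the ascent generating polynomial over the words
`w ∈ SW'_γ(n,r)` (words `(w₀, …, w_n) ∈ {0, …, r-1}^{n+1}` with `w₀ = 0` and
`|w_j - w_{j-1}| > γ_{w_j}` for `1 ≤ j ≤ n`) that end in the letter `i`. -/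
noncomputable def Egamma (r n : ℕ) (γ : Fin r → ℤ) (i : ℕ) : Polynomial ℝ :=
  ∑ w ∈ Finset.univ.filter (fun w : Fin (n + 1) → Fin r =>
      (w 0 : ℕ) = 0 ∧
      (∀ j : Fin n, |((w j.succ : ℕ) : ℤ) - ((w j.castSucc : ℕ) : ℤ)| > γ (w j.succ)) ∧
      (w (Fin.last n) : ℕ) = i),
    Polynomial.X ^ asc w

lemma asc_snoc {m r : ℕ} (w' : Fin (m + 1) → Fin r) (i : Fin r) :
    asc (Fin.snoc w' i : Fin (m + 1 + 1) → Fin r)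
      = asc w' + (if w' (Fin.last m) < i then 1 else 0) := by
  unfold asc
  rw [Finset.card_filter, Finset.card_filter, Fin.sum_univ_castSucc]
  congr 1
  · refine Finset.sum_congr rfl fun k _ => ?_
    simp [Fin.succ_castSucc, Fin.snoc_castSucc, -Fin.castSucc_succ]
  · simp [Fin.succ_last, Fin.snoc_castSucc, Fin.snoc_last]


/-- The recurrence `(E_{γ,r,n}^0, …, E_{γ,r,n}^{r-1})ᵀ = A · (E_{γ,r,n-1}^0, …, E_{γ,r,n-1}^{r-1})ᵀ`,
where `a_{ij} = 0` if `|i - j| ≤ γ_i`, `a_{ij} = 1` if `j - i > γ_i`, and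
`a_{ij} = x` if `i - j > γ_i`. -/
theorem stmt18 (n r : ℕ) (hn : 2 ≤ n) (hr : 2 ≤ r) (γ : Fin r → ℤ)
    (hγ1 : ∀ i, 0 ≤ γ i ∧ γ i ≤ (r : ℤ) - 2)
    (hγ2 : ∀ i j : Fin r, (j : ℕ) = (i : ℕ) + 1 → |γ j - γ i| ≤ 1)
    (A : Matrix (Fin r) (Fin r) (Polynomial ℝ))
    (hA : ∀ i j : Fin r,
      (|((i : ℕ) : ℤ) - ((j : ℕ) : ℤ)| ≤ γ i → A i j = 0) ∧
      (((j : ℕ) : ℤ) - ((i : ℕ) : ℤ) > γ i → A i j = 1) ∧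
      (((i : ℕ) : ℤ) - ((j : ℕ) : ℤ) > γ i → A i j = Polynomial.X)) :
    ∀ i : Fin r, Egamma r n γ (i : ℕ) = ∑ j : Fin r, A i j * Egamma r (n - 1) γ (j : ℕ) := by
  intro i
  obtain ⟨m, rfl⟩ : ∃ m, n = m + 1 := ⟨n - 1, by omega⟩
  simp only [Nat.add_sub_cancel]
  classical
  -- the common condition on words of length m+1
  set cnd : (Fin (m + 1) → Fin r) → Prop := fun w' =>
    (w' 0 : ℕ) = 0 ∧ ∀ k : Fin m,
      |((w' k.succ : ℕ) : ℤ) - ((w' k.castSucc : ℕ) : ℤ)| > γ (w' k.succ) with hcnd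
  have hcnddec : DecidablePred cnd := fun _ => by rw [hcnd]; infer_instance
  -- Step 1 : LHS
  have step1 : Egamma r (m + 1) γ (i : ℕ)
      = ∑ w' ∈ Finset.univ.filter (fun w' : Fin (m + 1) → Fin r => cnd w' ∧
          |((i : ℕ) : ℤ) - ((w' (Fin.last m) : ℕ) : ℤ)| > γ i),
          Polynomial.X ^ (asc w' + if w' (Fin.last m) < i then 1 else 0) := by
    unfold Egamma
    refine Finset.sum_nbij' (fun w => w ∘ Fin.castSucc) (fun w' => Fin.snoc w' i)
      ?_ ?_ ?_ ?_ ?_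
    · intro w hw
      simp only [Finset.mem_filter, Finset.mem_univ, true_and] at hw ⊢
      obtain ⟨h0, hcond, hlast⟩ := hw
      have hli : w (Fin.last (m + 1)) = i := Fin.ext hlast
      refine ⟨⟨?_, ?_⟩, ?_⟩
      · simpa using h0
      · intro k
        have := hcond k.castSucc
        simpa [Fin.succ_castSucc, Function.comp, -Fin.castSucc_succ] using this
      · have := hcond (Fin.last m)
        simpa [Fin.succ_last, hli, Function.comp] using this
    · intro w' hw'
      simp only [Finset.mem_filter, Finset.mem_univ, true_and] at hw' ⊢
      obtain ⟨⟨h0, hcond⟩, hlast⟩ := hw'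
      refine ⟨?_, ?_, ?_⟩
      · rw [show (0 : Fin (m + 1 + 1)) = Fin.castSucc 0 from (Fin.castSucc_zero).symm,
          Fin.snoc_castSucc]
        exact h0
      · intro j
        induction j using Fin.lastCases with
        | last => simpa [Fin.succ_last, Fin.snoc_castSucc, Fin.snoc_last] using hlast
        | cast k => simpa [Fin.succ_castSucc, Fin.snoc_castSucc, -Fin.castSucc_succ] using hcond k
      · simp [Fin.snoc_last]
    · intro w hw
      simp only [Finset.mem_filter, Finset.mem_univ, true_and] at hw
      have hli : w (Fin.last (m + 1)) = i := Fin.ext hw.2.2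
      funext x
      induction x using Fin.lastCases with
      | last => simp [Fin.snoc_last, hli]
      | cast k => simp [Fin.snoc_castSucc, Function.comp]
    · intro w' _
      funext x
      simp [Fin.snoc_castSucc, Function.comp]
    · intro w hw
      simp only [Finset.mem_filter, Finset.mem_univ, true_and] at hw
      have hli : w (Fin.last (m + 1)) = i := Fin.ext hw.2.2
      have : w = Fin.snoc (w ∘ Fin.castSucc) i := by
        funext x
        induction x using Fin.lastCases with
        | last => simp [Fin.snoc_last, hli]
        | cast k => simp [Fin.snoc_castSucc, Function.comp]
      rw [congrArg asc this, asc_snoc]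
  rw [step1]
  -- Step 2 : RHS
  have hAval : ∀ (j : Fin r), A i j =
      if γ i < |((i : ℕ) : ℤ) - ((j : ℕ) : ℤ)| then
        (if j < i then Polynomial.X else 1) else 0 := by
    intro j
    obtain ⟨h0, h1, hX⟩ := hA i j
    by_cases h : γ i < |((i : ℕ) : ℤ) - ((j : ℕ) : ℤ)|
    · rw [if_pos h]
      rcases lt_abs.mp h with hc | hc
      · -- i - j > γ i, so j < i
        have hji : (j : ℕ) < (i : ℕ) := by
          have := (hγ1 i).1; omega
        rw [if_pos (Fin.lt_def.mpr hji), hX hc]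
      · -- j - i > γ i, so i < j
        have hij : (i : ℕ) < (j : ℕ) := by
          have := (hγ1 i).1; omega
        have hnlt : ¬ j < i := by rw [Fin.lt_def]; omega
        rw [if_neg hnlt, h1 (by omega)]
    · rw [if_neg h, h0 (not_lt.mp h)]
  have step2 : (∑ j : Fin r, A i j * Egamma r m γ (j : ℕ))
      = ∑ w' ∈ Finset.univ.filter cnd,
          (if |((i : ℕ) : ℤ) - ((w' (Fin.last m) : ℕ) : ℤ)| > γ i then
            (if w' (Fin.last m) < i then Polynomial.X else 1) else 0)
          * Polynomial.X ^ asc w' := by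
    rw [← Finset.sum_fiberwise (Finset.univ.filter cnd)
      (fun w' : Fin (m + 1) → Fin r => w' (Fin.last m))]
    refine Finset.sum_congr rfl fun j _ => ?_
    unfold Egamma
    rw [Finset.mul_sum]
    refine Finset.sum_congr ?_ fun w' hw' => ?_
    · rw [Finset.filter_filter]
      refine Finset.filter_congr fun w' _ => ?_
      rw [hcnd]
      simp only [and_assoc, Fin.ext_iff]
    · have hlast : w' (Fin.last m) = j := by
        simp only [Finset.mem_filter] at hw'
        exact hw'.2
      rw [hAval j, ← hlast]
  rw [step2, ← Finset.filter_filter, Finset.sum_filter]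
  refine Finset.sum_congr rfl fun w' _ => ?_
  by_cases hp : |((i : ℕ) : ℤ) - ((w' (Fin.last m) : ℕ) : ℤ)| > γ i
  · rw [if_pos hp, if_pos hp]
    by_cases hlt : w' (Fin.last m) < i
    · rw [if_pos hlt, if_pos hlt, pow_add, pow_one, mul_comm]
    · rw [if_neg hlt, if_neg hlt, add_zero, one_mul]
  · rw [if_neg hp, if_neg hp, zero_mul]
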